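/- arXiv:1704.07745 — 9 statements merged into one kernel-verified Lean document; each statement's English description precedes it below -/
import Mathlib

section
/- Let a ∈ ℂ with a ≠ 0, let d, e ∈ ℝ² be unit vectors, and let D, E, η, ξ ∈ ℝ. Define u : ℝ² → ℂ by u(x) = a·exp(i·(D·⟪d,x⟫ + i·E·⟪e,x⟫)). Then u satisfies the Helmholtz equation Δu + (η + iξ)²·u = 0 at every point of ℝ² if and only if D² − E² = η² − ξ² and D·E·⟪d,e⟫ = η·ξ. -/
noncomputable section

open Complex

/-- The Euclidean plane ℝ². -/
abbrev V : Type := EuclideanSpace ℝ (Fin 2)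

/-- A (possibly inhomogeneous) plane wave with amplitude `a`, propagation direction `d`,
decay direction `e`, and propagation/decay constants `D`, `E`:
`u(x) = a·exp(i·(D·⟪d,x⟫ + i·E·⟪e,x⟫))`. -/
noncomputable def planeWave (a : ℂ) (d e : V) (D E : ℝ) (x : V) : ℂ :=
  a * Complex.exp (Complex.I *
    ((D : ℂ) * ((inner ℝ d x : ℝ) : ℂ) + Complex.I * ((E : ℂ) * ((inner ℝ e x : ℝ) : ℂ))))

/-- The Laplacian on ℝ² of a complex-valued function. -/
noncomputable def laplacian (u : V → ℂ) (x : V) : ℂ :=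
  ∑ i : Fin 2, iteratedFDeriv ℝ 2 u x ![EuclideanSpace.single i (1 : ℝ),
    EuclideanSpace.single i (1 : ℝ)]

theorem planeWave_helmholtz_iff (a : ℂ) (ha : a ≠ 0) (d e : V)
    (hd : ‖d‖ = 1) (he : ‖e‖ = 1) (D E η ξ : ℝ) :
    (∀ x : V, laplacian (planeWave a d e D E) x
        + ((η : ℂ) + Complex.I * (ξ : ℂ)) ^ 2 * planeWave a d e D E x = 0)
      ↔ (D ^ 2 - E ^ 2 = η ^ 2 - ξ ^ 2 ∧ D * E * (inner ℝ d e : ℝ) = η * ξ) := by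
  set c1 : ℂ := Complex.I * (D : ℂ) with hc1
  set c2 : ℂ := -(E : ℂ) with hc2
  set f : V →L[ℝ] ℂ :=
    c1 • (Complex.ofRealCLM.comp (innerSL ℝ d)) + c2 • (Complex.ofRealCLM.comp (innerSL ℝ e))
    with hf
  have hfapp : ∀ x : V, f x = c1 * ((inner ℝ d x : ℝ) : ℂ) + c2 * ((inner ℝ e x : ℝ) : ℂ) := by
    intro x
    simp [hf, smul_eq_mul]
  have hu : ∀ x : V, planeWave a d e D E x = a * Complex.exp (f x) := by
    intro x
    rw [planeWave, hfapp x, hc1, hc2]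
    congr 2
    have : Complex.I * Complex.I = -1 := Complex.I_mul_I
    linear_combination (E : ℂ) * ((inner ℝ e x : ℝ) : ℂ) * this
  have hune : ∀ x : V, planeWave a d e D E x ≠ 0 := by
    intro x
    rw [hu x]
    exact mul_ne_zero ha (Complex.exp_ne_zero _)
  -- first derivative
  have hderiv : ∀ x : V, HasFDerivAt (planeWave a d e D E)
      ((planeWave a d e D E x) • (f : V →L[ℝ] ℂ)) x := by
    intro x
    have h1 : HasFDerivAt (fun y : V => f y) (f : V →L[ℝ] ℂ) x := f.hasFDerivAt
    have h2 := (h1.cexp).const_mul a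
    have : (fun y : V => a * Complex.exp (f y)) = planeWave a d e D E := by
      funext y; rw [hu y]
    rw [this] at h2
    rw [show planeWave a d e D E x • f = a • Complex.exp (f x) • f by rw [hu x, smul_smul]]
    exact h2
  have hfd : fderiv ℝ (planeWave a d e D E) = fun x =>
      (planeWave a d e D E x) • (f : V →L[ℝ] ℂ) := by
    funext x; exact (hderiv x).fderiv
  -- second derivative
  have hsecond : ∀ (x : V) (v w : V),
      iteratedFDeriv ℝ 2 (planeWave a d e D E) x ![v, w]
        = planeWave a d e D E x * (f v * f w) := by
    intro x v w
    rw [iteratedFDeriv_two_apply]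
    have h2 : HasFDerivAt (fun y : V => (planeWave a d e D E y) • (f : V →L[ℝ] ℂ))
        (((planeWave a d e D E x) • (f : V →L[ℝ] ℂ)).smulRight f) x :=
      (hderiv x).smul_const f
    rw [hfd, h2.fderiv]
    simp [smul_eq_mul]
    ring
  -- Laplacian value
  have hsum : ∑ i : Fin 2, f (EuclideanSpace.single i (1 : ℝ)) ^ 2
      = c1 ^ 2 + 2 * c1 * c2 * ((inner ℝ d e : ℝ) : ℂ) + c2 ^ 2 := by
    have hd2 : (∑ i : Fin 2, (d i : ℂ) * (d i : ℂ)) = 1 := by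
      have : (inner ℝ d d : ℝ) = ∑ i : Fin 2, d i * d i := by
        rw [PiLp.inner_apply]; simp [Fin.sum_univ_two, mul_comm]; ring
      have h1 : (inner ℝ d d : ℝ) = 1 := by
        rw [real_inner_self_eq_norm_sq, hd]; norm_num
      rw [this] at h1
      calc (∑ i : Fin 2, (d i : ℂ) * (d i : ℂ)) = ((∑ i : Fin 2, d i * d i : ℝ) : ℂ) := by
            push_cast; ring
        _ = 1 := by rw [h1]; norm_num
    have he2 : (∑ i : Fin 2, (e i : ℂ) * (e i : ℂ)) = 1 := by
      have : (inner ℝ e e : ℝ) = ∑ i : Fin 2, e i * e i := by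
        rw [PiLp.inner_apply]; simp [Fin.sum_univ_two, mul_comm]; ring
      have h1 : (inner ℝ e e : ℝ) = 1 := by
        rw [real_inner_self_eq_norm_sq, he]; norm_num
      rw [this] at h1
      calc (∑ i : Fin 2, (e i : ℂ) * (e i : ℂ)) = ((∑ i : Fin 2, e i * e i : ℝ) : ℂ) := by
            push_cast; ring
        _ = 1 := by rw [h1]; norm_num
    have hde : (∑ i : Fin 2, (d i : ℂ) * (e i : ℂ)) = ((inner ℝ d e : ℝ) : ℂ) := by
      have : (inner ℝ d e : ℝ) = ∑ i : Fin 2, d i * e i := by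
        simp [PiLp.inner_apply]; ring
      rw [this]; push_cast; ring
    have hfi : ∀ i : Fin 2, f (EuclideanSpace.single i (1 : ℝ))
        = c1 * (d i : ℂ) + c2 * (e i : ℂ) := by
      intro i
      rw [hfapp]
      simp [real_inner_comm, EuclideanSpace.inner_single_left, EuclideanSpace.inner_single_right]
    simp only [hfi]
    have : ∑ i : Fin 2, (c1 * (d i : ℂ) + c2 * (e i : ℂ)) ^ 2
        = c1 ^ 2 * (∑ i : Fin 2, (d i : ℂ) * (d i : ℂ))
          + 2 * c1 * c2 * (∑ i : Fin 2, (d i : ℂ) * (e i : ℂ))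
          + c2 ^ 2 * (∑ i : Fin 2, (e i : ℂ) * (e i : ℂ)) := by
      simp only [Finset.mul_sum, ← Finset.sum_add_distrib]
      congr 1; funext i; ring
    rw [this, hd2, he2, hde]; ring
  set K : ℂ := c1 ^ 2 + 2 * c1 * c2 * ((inner ℝ d e : ℝ) : ℂ) + c2 ^ 2 with hK
  have hlap : ∀ x : V, laplacian (planeWave a d e D E) x = K * planeWave a d e D E x := by
    intro x
    rw [laplacian]
    have : ∀ i : Fin 2, iteratedFDeriv ℝ 2 (planeWave a d e D E) x
        ![EuclideanSpace.single i (1 : ℝ), EuclideanSpace.single i (1 : ℝ)]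
        = planeWave a d e D E x * (f (EuclideanSpace.single i (1 : ℝ))) ^ 2 := by
      intro i
      rw [hsecond x _ _]; ring
    simp only [this, ← Finset.mul_sum, hsum, hK]
    ring
  -- reduce to algebraic condition
  have key : (∀ x : V, laplacian (planeWave a d e D E) x
        + ((η : ℂ) + Complex.I * (ξ : ℂ)) ^ 2 * planeWave a d e D E x = 0)
      ↔ K + ((η : ℂ) + Complex.I * (ξ : ℂ)) ^ 2 = 0 := by
    constructor
    · intro h
      have h0 := h 0
      rw [hlap 0] at h0
      have : (K + ((η : ℂ) + Complex.I * (ξ : ℂ)) ^ 2) * planeWave a d e D E 0 = 0 := by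
        rw [add_mul]; linear_combination h0
      rcases mul_eq_zero.1 this with h' | h'
      · exact h'
      · exact absurd h' (hune 0)
    · intro h x
      rw [hlap x]
      have : (K + ((η : ℂ) + Complex.I * (ξ : ℂ)) ^ 2) * planeWave a d e D E x = 0 := by
        rw [h, zero_mul]
      linear_combination this
  rw [key]
  have expand : K + ((η : ℂ) + Complex.I * (ξ : ℂ)) ^ 2
      = ((η ^ 2 - ξ ^ 2 - (D ^ 2 - E ^ 2) : ℝ) : ℂ)
        + ((2 * (η * ξ - D * E * (inner ℝ d e : ℝ)) : ℝ) : ℂ) * Complex.I := by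
    rw [hK, hc1, hc2]
    push_cast
    ring_nf
    rw [Complex.I_sq]
    ring
  have gen : ∀ A B : ℝ, ((A : ℂ) + (B : ℂ) * Complex.I = 0) ↔ (A = 0 ∧ B = 0) := by
    intro A B
    constructor
    · intro h
      simpa [Complex.ext_iff] using h
    · rintro ⟨h1, h2⟩
      rw [h1, h2]; simp
  rw [expand, gen]
  constructor
  · rintro ⟨h1, h2⟩
    exact ⟨by linarith, by linear_combination (-1/2 : ℝ) * h2⟩
  · rintro ⟨h1, h2⟩
    exact ⟨by linarith, by linear_combination -2 * h2⟩
end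
end

section
/- Let t, n ∈ ℝ² be orthonormal vectors. Let aⁱ, aʳ, aᵗ ∈ ℂ, let dⁱ, eⁱ, dᵗ, eᵗ ∈ ℝ² be unit vectors, and let D_i, E_i, D_t, E_t ∈ ℝ. Define the reflected direction vectors dʳ = dⁱ − 2⟪dⁱ,n⟫·n and eʳ = eⁱ − 2⟪eⁱ,n⟫·n. Suppose aⁱ + aʳ ≠ 0 and that for every x ∈ ℝ² with ⟪x,n⟫ = 0 one has aⁱ·exp(i·(D_i·⟪dⁱ,x⟫ + i·E_i·⟪eⁱ,x⟫)) + aʳ·exp(i·(D_i·⟪dʳ,x⟫ + i·E_i·⟪eʳ,x⟫)) = aᵗ·exp(i·(D_t·⟪dᵗ,x⟫ + i·E_t·⟪eᵗ,x⟫)). Then aᵗ = aⁱ + aʳ, and Snell's law holds: D_i·⟪dⁱ,t⟫ = D_t·⟪dᵗ,t⟫ and E_i·⟪eⁱ,t⟫ = E_t·⟪eᵗ,t⟫. -/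
noncomputable section

open Complex

/-- Auxiliary extraction lemma: equality of the exponents modulo `2πi` gives two
real equations (imaginary and real parts). -/
lemma snell_aux (Di Ei Dt Et A B C D : ℝ) (k : ℤ)
    (hk : Complex.I * ((Di : ℂ) * (A:ℂ) + Complex.I * ((Ei:ℂ) * (B:ℂ))) =
      Complex.I * ((Dt:ℂ) * (C:ℂ) + Complex.I * ((Et:ℂ) * (D:ℂ)))
        + (k:ℂ) * (2 * (Real.pi:ℂ) * Complex.I)) :
    Di * A = Dt * C + k * (2*Real.pi) ∧ Ei * B = Et * D := by
  rw [Complex.ext_iff] at hk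
  obtain ⟨h1, h2⟩ := hk
  simp only [Complex.add_re, Complex.add_im, Complex.mul_re, Complex.mul_im,
    Complex.I_re, Complex.I_im, Complex.ofReal_re, Complex.ofReal_im,
    Complex.intCast_re, Complex.intCast_im, Complex.re_ofNat, Complex.im_ofNat] at h1 h2
  constructor <;> nlinarith [h1, h2]

theorem matching_on_interface_implies_snell
    (t n : V) (ht : ‖t‖ = 1) (hn : ‖n‖ = 1) (htn : (inner ℝ t n : ℝ) = 0)
    (aI aR aT : ℂ) (di ei dt et : V)
    (hdi : ‖di‖ = 1) (hei : ‖ei‖ = 1) (hdt : ‖dt‖ = 1) (het : ‖et‖ = 1)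
    (Di Ei Dt Et : ℝ)
    (dr : V) (hdr : dr = di - (2 * (inner ℝ di n : ℝ)) • n)
    (er : V) (her : er = ei - (2 * (inner ℝ ei n : ℝ)) • n)
    (hsum : aI + aR ≠ 0)
    (hmatch : ∀ x : V, (inner ℝ x n : ℝ) = 0 →
      planeWave aI di ei Di Ei x + planeWave aR dr er Di Ei x
        = planeWave aT dt et Dt Et x) :
    aT = aI + aR ∧ Di * (inner ℝ di t : ℝ) = Dt * (inner ℝ dt t : ℝ)
      ∧ Ei * (inner ℝ ei t : ℝ) = Et * (inner ℝ et t : ℝ) := by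
  subst hdr her
  have h0 := hmatch 0 (by simp)
  simp [planeWave] at h0
  have hnt : (inner ℝ n t : ℝ) = 0 := by rw [real_inner_comm]; exact htn
  have haT : aT ≠ 0 := h0 ▸ hsum
  have key : ∀ s : ℝ, ∃ k : ℤ,
      Di * (s * (inner ℝ di t : ℝ)) = Dt * (s * (inner ℝ dt t : ℝ)) + k * (2 * Real.pi)
      ∧ Ei * (s * (inner ℝ ei t : ℝ)) = Et * (s * (inner ℝ et t : ℝ)) := by
    intro s
    have hx : (inner ℝ (s • t) n : ℝ) = 0 := by
      rw [real_inner_smul_left, htn]; ring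
    have h := hmatch (s • t) hx
    simp only [planeWave, inner_sub_left, real_inner_smul_left, real_inner_smul_right,
      hnt, htn, real_inner_comm t di, real_inner_comm t ei, real_inner_comm t dt,
      real_inner_comm t et, mul_zero, zero_mul, sub_zero, mul_comm] at h
    rw [← add_mul, h0] at h
    have h2 := mul_left_cancel₀ haT h
    rw [Complex.exp_eq_exp_iff_exists_int] at h2
    obtain ⟨k, hk⟩ := h2
    obtain ⟨h1, h2⟩ := snell_aux Di Ei Dt Et _ _ _ _ k hk
    exact ⟨k, by rw [real_inner_comm di t, real_inner_comm dt t] at h1; linarith,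
      by rw [real_inner_comm ei t, real_inner_comm et t] at h2; linarith⟩
  refine ⟨h0.symm, ?_, ?_⟩
  · by_contra hne
    have hd : Di * (inner ℝ di t : ℝ) - Dt * (inner ℝ dt t : ℝ) ≠ 0 := fun h => hne (by linarith)
    obtain ⟨k, hk, -⟩ := key (Real.pi / (Di * (inner ℝ di t : ℝ) - Dt * (inner ℝ dt t : ℝ)))
    have hpi : Real.pi = k * (2 * Real.pi) := by
      have : Real.pi / (Di * (inner ℝ di t : ℝ) - Dt * (inner ℝ dt t : ℝ))
          * (Di * (inner ℝ di t : ℝ) - Dt * (inner ℝ dt t : ℝ)) = Real.pi :=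
        div_mul_cancel₀ _ hd
      nlinarith [hk, this]
    have h1 : (1 : ℝ) = 2 * k := by
      have := Real.pi_ne_zero
      have : (1 : ℝ) * Real.pi = (2 * k) * Real.pi := by ring_nf; linarith [hpi]
      exact mul_right_cancel₀ Real.pi_ne_zero this
    have h2 : (1 : ℤ) = 2 * k := by exact_mod_cast h1
    omega
  · obtain ⟨-, -, he⟩ := key 1
    simpa using he
end
end

section
/- Let t, n ∈ ℝ² be orthonormal vectors. Let dⁱ, eⁱ, dᵗ, eᵗ ∈ ℝ² be unit vectors, let D_i, E_i, D_t, E_t ∈ ℝ, and define the reflected direction vectors dʳ = dⁱ − 2⟪dⁱ,n⟫·n and eʳ = eⁱ − 2⟪eⁱ,n⟫·n. Let uⁱ(x) = aⁱ·exp(i·(D_i·⟪dⁱ,x⟫ + i·E_i·⟪eⁱ,x⟫)), uʳ(x) = aʳ·exp(i·(D_i·⟪dʳ,x⟫ + i·E_i·⟪eʳ,x⟫)), uᵗ(x) = aᵗ·exp(i·(D_t·⟪dᵗ,x⟫ + i·E_t·⟪eᵗ,x⟫)), with aⁱ, aʳ, aᵗ ∈ ℂ. Set γ_i := D_i·⟪dⁱ,n⟫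 + i·E_i·⟪eⁱ,n⟫ and γ_t := D_t·⟪dᵗ,n⟫ + i·E_t·⟪eᵗ,n⟫. Assume Snell's law: D_i·⟪dⁱ,t⟫ = D_t·⟪dᵗ,t⟫ and E_i·⟪eⁱ,t⟫ = E_t·⟪eᵗ,t⟫. Let α ∈ ℂ, and assume aⁱ ≠ 0 and γ_i + α·γ_t ≠ 0. Then the following are equivalent: (a) for every x ∈ ℝ² with ⟪x,n⟫ = 0, uⁱ(x) + uʳ(x) = uᵗ(x) and the directional derivatives in the direction n satisfy ∂ₙuⁱ(x) + ∂ₙuʳ(x) = α·∂ₙuᵗ(x); (b) the Fresnel formulas hold: aʳ = aⁱ·(γ_i − α·γ_t)/(γ_i + α·γ_t) and aᵗ = 2·aⁱ·γ_i/(γ_i + α·γ_t). -/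
noncomputable section

open Complex

/-- Directional derivative of `u` at `x` in the direction `n`. -/
noncomputable def dirDeriv (u : V → ℂ) (n x : V) : ℂ := fderiv ℝ u x n

lemma decompV (t n : V) (ht : ‖t‖ = 1) (hn : ‖n‖ = 1) (htn : (inner ℝ t n : ℝ) = 0) (x : V) :
    ((inner ℝ t x : ℝ)) • t + ((inner ℝ n x : ℝ)) • n = x := by
  have horth : Orthonormal ℝ ![t, n] := by
    constructor
    · intro i
      fin_cases i <;> simp only [Matrix.cons_val_zero, Matrix.cons_val_one, Matrix.head_cons] <;>
        assumption
    · intro i j hij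
      fin_cases i <;> fin_cases j <;>
        simp only [Matrix.cons_val_zero, Matrix.cons_val_one, Matrix.head_cons] <;>
        first
          | exact absurd rfl hij
          | exact htn
          | rw [real_inner_comm]; exact htn
  have hcard : Fintype.card (Fin 2) = Module.finrank ℝ V := by simp
  have hspan : ⊤ ≤ Submodule.span ℝ (Set.range ![t, n]) := by
    rw [← coe_basisOfOrthonormalOfCardEqFinrank horth hcard]
    exact (basisOfOrthonormalOfCardEqFinrank horth hcard).span_eq.ge
  let b : OrthonormalBasis (Fin 2) ℝ V := OrthonormalBasis.mk horth hspan
  have := b.sum_repr' x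
  simpa [b, OrthonormalBasis.coe_mk, Fin.sum_univ_two] using this

lemma dirDeriv_planeWave (a : ℂ) (d e : V) (D E : ℝ) (n x : V) :
    dirDeriv (planeWave a d e D E) n x =
      planeWave a d e D E x *
        (Complex.I * ((D : ℂ) * ((inner ℝ d n : ℝ) : ℂ)
          + Complex.I * ((E : ℂ) * ((inner ℝ e n : ℝ) : ℂ)))) := by
  set L : V →L[ℝ] ℂ :=
    Complex.I • ((D : ℂ) • (Complex.ofRealCLM.comp (innerSL ℝ d))
      + Complex.I • ((E : ℂ) • (Complex.ofRealCLM.comp (innerSL ℝ e)))) with hL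
  have hLapp : ∀ y : V, L y = Complex.I *
      ((D : ℂ) * ((inner ℝ d y : ℝ) : ℂ) + Complex.I * ((E : ℂ) * ((inner ℝ e y : ℝ) : ℂ))) := by
    intro y; simp [hL]; ring
  have hpw : planeWave a d e D E = fun y => a * Complex.exp (L y) := by
    funext y; rw [planeWave, hLapp]
  have hderiv : HasFDerivAt (planeWave a d e D E)
      (a • (Complex.exp (L x) • L)) x := by
    rw [hpw]
    exact (L.hasFDerivAt.cexp).const_mul a
  rw [dirDeriv, hderiv.fderiv]
  simp [hpw, hLapp, smul_eq_mul]
  ring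

theorem transmission_conditions_iff_fresnel
    (t n : V) (ht : ‖t‖ = 1) (hn : ‖n‖ = 1) (htn : (inner ℝ t n : ℝ) = 0)
    (di ei dt et : V)
    (hdi : ‖di‖ = 1) (hei : ‖ei‖ = 1) (hdt : ‖dt‖ = 1) (het : ‖et‖ = 1)
    (Di Ei Dt Et : ℝ)
    (dr : V) (hdr : dr = di - (2 * (inner ℝ di n : ℝ)) • n)
    (er : V) (her : er = ei - (2 * (inner ℝ ei n : ℝ)) • n)
    (aI aR aT : ℂ)
    (γi γt : ℂ)
    (hγi : γi = (Di : ℂ) * ((inner ℝ di n : ℝ) : ℂ) + Complex.I * ((Ei : ℂ) * ((inner ℝ ei n : ℝ) : ℂ)))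
    (hγt : γt = (Dt : ℂ) * ((inner ℝ dt n : ℝ) : ℂ) + Complex.I * ((Et : ℂ) * ((inner ℝ et n : ℝ) : ℂ)))
    (hSnellD : Di * (inner ℝ di t : ℝ) = Dt * (inner ℝ dt t : ℝ))
    (hSnellE : Ei * (inner ℝ ei t : ℝ) = Et * (inner ℝ et t : ℝ))
    (α : ℂ) (haI : aI ≠ 0) (hden : γi + α * γt ≠ 0) :
    (∀ x : V, (inner ℝ x n : ℝ) = 0 →
        (planeWave aI di ei Di Ei x + planeWave aR dr er Di Ei x
            = planeWave aT dt et Dt Et x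
          ∧ dirDeriv (planeWave aI di ei Di Ei) n x + dirDeriv (planeWave aR dr er Di Ei) n x
            = α * dirDeriv (planeWave aT dt et Dt Et) n x))
      ↔ (aR = aI * (γi - α * γt) / (γi + α * γt)
          ∧ aT = 2 * aI * γi / (γi + α * γt)) := by
  have hI : Complex.I * Complex.I = -1 := Complex.I_mul_I
  -- reflected normal components
  have hdrn : (inner ℝ dr n : ℝ) = -(inner ℝ di n : ℝ) := by
    rw [hdr, inner_sub_left, real_inner_smul_left, real_inner_self_eq_norm_sq, hn]; ring
  have hern : (inner ℝ er n : ℝ) = -(inner ℝ ei n : ℝ) := by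
    rw [her, inner_sub_left, real_inner_smul_left, real_inner_self_eq_norm_sq, hn]; ring
  have hγr : (Di : ℂ) * ((inner ℝ dr n : ℝ) : ℂ)
      + Complex.I * ((Ei : ℂ) * ((inner ℝ er n : ℝ) : ℂ)) = -γi := by
    rw [hdrn, hern, hγi]; push_cast; ring
  constructor
  · intro h
    obtain ⟨h1, h2⟩ := h 0 (by simp)
    have hz : ∀ d : V, (inner ℝ d (0 : V) : ℝ) = 0 := fun d => inner_zero_right d
    rw [dirDeriv_planeWave, dirDeriv_planeWave, dirDeriv_planeWave] at h2
    simp only [planeWave, hz, Complex.ofReal_zero, mul_zero, zero_mul, zero_add, add_zero,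
      Complex.exp_zero, mul_one] at h1 h2
    -- h1 : aI + aR = aT
    rw [hγr, ← hγi, ← hγt] at h2
    have e2' : (aI - aR) * γi = α * (aT * γt) :=
      mul_left_cancel₀ Complex.I_ne_zero (by linear_combination h2)
    constructor
    · field_simp
      linear_combination (-1 : ℂ) * e2' + (α * γt) * h1
    · field_simp
      linear_combination -(γi * h1) - e2'
  · rintro ⟨hR, hT⟩ x hx
    have e1 : aI + aR = aT := by
      rw [hR, hT]; field_simp; ring
    have e2' : (aI - aR) * γi = α * (aT * γt) := by
      rw [hR, hT]; field_simp; ring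
    have hnx : (inner ℝ n x : ℝ) = 0 := by rw [real_inner_comm]; exact hx
    have hxdec : x = ((inner ℝ t x : ℝ)) • t := by
      have := decompV t n ht hn htn x
      rw [hnx, zero_smul, add_zero] at this
      exact this.symm
    have hdrx : (inner ℝ dr x : ℝ) = (inner ℝ di x : ℝ) := by
      rw [hdr, inner_sub_left, real_inner_smul_left, hnx]; ring
    have herx : (inner ℝ er x : ℝ) = (inner ℝ ei x : ℝ) := by
      rw [her, inner_sub_left, real_inner_smul_left, hnx]; ring
    have hdtx : Dt * (inner ℝ dt x : ℝ) = Di * (inner ℝ di x : ℝ) := by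
      have h1 : (inner ℝ dt x : ℝ) = (inner ℝ t x : ℝ) * (inner ℝ dt t : ℝ) := by
        conv_lhs => rw [hxdec]
        rw [real_inner_smul_right]
      have h2 : (inner ℝ di x : ℝ) = (inner ℝ t x : ℝ) * (inner ℝ di t : ℝ) := by
        conv_lhs => rw [hxdec]
        rw [real_inner_smul_right]
      rw [h1, h2]
      linear_combination (-(inner ℝ t x : ℝ)) * hSnellD
    have hetx : Et * (inner ℝ et x : ℝ) = Ei * (inner ℝ ei x : ℝ) := by
      have h1 : (inner ℝ et x : ℝ) = (inner ℝ t x : ℝ) * (inner ℝ et t : ℝ) := by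
        conv_lhs => rw [hxdec]
        rw [real_inner_smul_right]
      have h2 : (inner ℝ ei x : ℝ) = (inner ℝ t x : ℝ) * (inner ℝ ei t : ℝ) := by
        conv_lhs => rw [hxdec]
        rw [real_inner_smul_right]
      rw [h1, h2]
      linear_combination (-(inner ℝ t x : ℝ)) * hSnellE
    set Ψ : ℂ := Complex.exp (Complex.I *
      ((Di : ℂ) * ((inner ℝ di x : ℝ) : ℂ)
        + Complex.I * ((Ei : ℂ) * ((inner ℝ ei x : ℝ) : ℂ)))) with hΨ
    have hcD : (Dt : ℂ) * ((inner ℝ dt x : ℝ) : ℂ) = (Di : ℂ) * ((inner ℝ di x : ℝ) : ℂ) := by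
      exact_mod_cast congrArg Complex.ofReal hdtx
    have hcE : (Et : ℂ) * ((inner ℝ et x : ℝ) : ℂ) = (Ei : ℂ) * ((inner ℝ ei x : ℝ) : ℂ) := by
      exact_mod_cast congrArg Complex.ofReal hetx
    have hpwI : planeWave aI di ei Di Ei x = aI * Ψ := rfl
    have hpwR : planeWave aR dr er Di Ei x = aR * Ψ := by
      rw [planeWave, hdrx, herx]
    have hpwT : planeWave aT dt et Dt Et x = aT * Ψ := by
      rw [planeWave, hΨ, hcD, hcE]
    constructor
    · rw [hpwI, hpwR, hpwT]
      linear_combination Ψ * e1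
    · rw [dirDeriv_planeWave, dirDeriv_planeWave, dirDeriv_planeWave,
        hpwI, hpwR, hpwT, hγr, ← hγi, ← hγt]
      linear_combination Complex.I * Ψ * e2'
end
end

section
/- Let t, n ∈ ℝ² be orthonormal vectors. Let dⁱ, eⁱ, dᵗ, eᵗ ∈ ℝ² be unit vectors and let D_i > 0, E_i > 0, D_t > 0, E_t > 0 be real numbers. Assume Snell's law: D_t·⟪dᵗ,t⟫ = D_i·⟪dⁱ,t⟫ and E_t·⟪eᵗ,t⟫ = E_i·⟪eⁱ,t⟫; assume the second medium is non-absorbing, i.e., the transmitted Helmholtz constraint reads D_t·E_t·⟪dᵗ,eᵗ⟫ = 0; and assume ⟪dⁱ,t⟫·⟪eⁱ,t⟫ > 0. Then ⟪dᵗ,n⟫·⟪eᵗ,n⟫ < 0. In particular, the conditions GO1 (⟪dᵗ,n⟫ ≥ 0) and GO2 (⟪eᵗ,n⟫ ≥ 0) cannot both hold. -/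
noncomputable section

lemma inner_decomp (t n : V) (ht : ‖t‖ = 1) (hn : ‖n‖ = 1)
    (htn : (inner ℝ t n : ℝ) = 0) (x y : V) :
    (inner ℝ x y : ℝ) = (inner ℝ x t : ℝ) * (inner ℝ y t : ℝ)
      + (inner ℝ x n : ℝ) * (inner ℝ y n : ℝ) := by
  have ho : Orthonormal ℝ ![t, n] := by
    rw [orthonormal_iff_ite]
    intro i j
    fin_cases i <;> fin_cases j <;>
      simp only [Matrix.cons_val_zero, Matrix.cons_val_one, Matrix.head_cons, Fin.mk_zero,
        Fin.mk_one, if_true, if_false, Fin.zero_eq_one_iff, Fin.one_eq_zero_iff,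
        Nat.succ_ne_self, ite_false, ite_true, ne_eq, OfNat.ofNat_ne_one,
        not_false_eq_true]
    · rw [real_inner_self_eq_norm_sq, ht]; norm_num
    · exact htn
    · exact (real_inner_comm t n).trans htn
    · rw [real_inner_self_eq_norm_sq, hn]; norm_num
  have hcard : Fintype.card (Fin 2) = Module.finrank ℝ V := by simp
  let b : Module.Basis (Fin 2) ℝ V := basisOfOrthonormalOfCardEqFinrank ho hcard
  have hb : ⇑b = ![t, n] := coe_basisOfOrthonormalOfCardEqFinrank ho hcard
  have hob : Orthonormal ℝ ⇑b := by rw [hb]; exact ho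
  let ob : OrthonormalBasis (Fin 2) ℝ V := b.toOrthonormalBasis hob
  have hob2 : ⇑ob = ![t, n] := by
    rw [show ⇑ob = ⇑b from b.coe_toOrthonormalBasis hob, hb]
  have := ob.sum_inner_mul_inner x y
  rw [Fin.sum_univ_two, hob2] at this
  simp only [Matrix.cons_val_zero, Matrix.cons_val_one, Matrix.head_cons] at this
  rw [← this, real_inner_comm t y, real_inner_comm n y]

theorem GO1_GO2_incompatible
    (t n : V) (ht : ‖t‖ = 1) (hn : ‖n‖ = 1) (htn : (inner ℝ t n : ℝ) = 0)
    (di ei dt et : V)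
    (hdi : ‖di‖ = 1) (hei : ‖ei‖ = 1) (hdt : ‖dt‖ = 1) (het : ‖et‖ = 1)
    (Di Ei Dt Et : ℝ) (hDi : 0 < Di) (hEi : 0 < Ei) (hDt : 0 < Dt) (hEt : 0 < Et)
    (hSnellD : Dt * (inner ℝ dt t : ℝ) = Di * (inner ℝ di t : ℝ))
    (hSnellE : Et * (inner ℝ et t : ℝ) = Ei * (inner ℝ ei t : ℝ))
    (hHelm : Dt * Et * (inner ℝ dt et : ℝ) = 0)
    (hsame : 0 < (inner ℝ di t : ℝ) * (inner ℝ ei t : ℝ)) :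
    (inner ℝ dt n : ℝ) * (inner ℝ et n : ℝ) < 0
      ∧ ¬((0 : ℝ) ≤ (inner ℝ dt n : ℝ) ∧ (0 : ℝ) ≤ (inner ℝ et n : ℝ)) := by
  have hde : (inner ℝ dt et : ℝ) = 0 := by
    have h : Dt * Et ≠ 0 := by positivity
    rcases mul_eq_zero.mp hHelm with h' | h'
    · exact absurd h' h
    · exact h'
  have hdec := inner_decomp t n ht hn htn dt et
  rw [hde] at hdec
  have htt : 0 < (inner ℝ dt t : ℝ) * (inner ℝ et t : ℝ) := by
    have h1 : (inner ℝ dt t : ℝ) = Di / Dt * (inner ℝ di t : ℝ) := by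
      rw [div_mul_eq_mul_div, eq_div_iff hDt.ne']; linarith
    have h2 : (inner ℝ et t : ℝ) = Ei / Et * (inner ℝ ei t : ℝ) := by
      rw [div_mul_eq_mul_div, eq_div_iff hEt.ne']; linarith
    rw [h1, h2]
    have : 0 < Di / Dt * (Ei / Et) := by positivity
    calc (0:ℝ) < Di / Dt * (Ei / Et) * ((inner ℝ di t : ℝ) * (inner ℝ ei t : ℝ)) :=
          mul_pos this hsame
      _ = Di / Dt * (inner ℝ di t : ℝ) * (Ei / Et * (inner ℝ ei t : ℝ)) := by ring
  have hlt : (inner ℝ dt n : ℝ) * (inner ℝ et n : ℝ) < 0 := by linarith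
  refine ⟨hlt, fun ⟨h1, h2⟩ => ?_⟩
  nlinarith
end
end

section
/- Let t, n ∈ ℝ² be orthonormal vectors. Let dⁱ, eⁱ, dᵗ, eᵗ ∈ ℝ² be unit vectors and let D_i, E_i ∈ ℝ, D_t > 0, E_t > 0, η̃, ξ̃ ∈ ℝ. Assume Snell's law: D_t·⟪dᵗ,t⟫ = D_i·⟪dⁱ,t⟫ and E_t·⟪eᵗ,t⟫ = E_i·⟪eⁱ,t⟫, and the transmitted Helmholtz constraint D_t·E_t·⟪dᵗ,eᵗ⟫ = η̃·ξ̃. If η̃·ξ̃ > D_i·E_i·⟪dⁱ,t⟫·⟪eⁱ,t⟫, then ⟪dᵗ,n⟫·⟪eᵗ,n⟫ > 0; in particular ⟪dᵗ,n⟫ > 0 if and only if ⟪eᵗ,n⟫ > 0, so the conditions GO1 (⟪dᵗ,n⟫ ≥ 0) and GO2 (⟪eᵗ,n⟫ ≥ 0) are compatible (either both hold or both fail). -/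
noncomputable section

theorem GO1_GO2_compatible_of_lt
    (t n : V) (ht : ‖t‖ = 1) (hn : ‖n‖ = 1) (htn : (inner ℝ t n : ℝ) = 0)
    (di ei dt et : V)
    (hdi : ‖di‖ = 1) (hei : ‖ei‖ = 1) (hdt : ‖dt‖ = 1) (het : ‖et‖ = 1)
    (Di Ei : ℝ) (Dt Et ηt ξt : ℝ) (hDt : 0 < Dt) (hEt : 0 < Et)
    (hSnellD : Dt * (inner ℝ dt t : ℝ) = Di * (inner ℝ di t : ℝ))
    (hSnellE : Et * (inner ℝ et t : ℝ) = Ei * (inner ℝ ei t : ℝ))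
    (hHelm : Dt * Et * (inner ℝ dt et : ℝ) = ηt * ξt)
    (hlt : Di * Ei * ((inner ℝ di t : ℝ) * (inner ℝ ei t : ℝ)) < ηt * ξt) :
    0 < (inner ℝ dt n : ℝ) * (inner ℝ et n : ℝ)
      ∧ ((0 : ℝ) < (inner ℝ dt n : ℝ) ↔ (0 : ℝ) < (inner ℝ et n : ℝ))
      ∧ (((0 : ℝ) ≤ (inner ℝ dt n : ℝ) ∧ (0 : ℝ) ≤ (inner ℝ et n : ℝ))
          ∨ (¬(0 : ℝ) ≤ (inner ℝ dt n : ℝ) ∧ ¬(0 : ℝ) ≤ (inner ℝ et n : ℝ))) := by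
  have hdec := inner_decomp t n ht hn htn dt et
  rw [hdec] at hHelm
  have hta : Dt * Et * ((inner ℝ dt t : ℝ) * (inner ℝ et t : ℝ))
      = Di * Ei * ((inner ℝ di t : ℝ) * (inner ℝ ei t : ℝ)) := by
    have : (Dt * (inner ℝ dt t : ℝ)) * (Et * (inner ℝ et t : ℝ))
        = (Di * (inner ℝ di t : ℝ)) * (Ei * (inner ℝ ei t : ℝ)) := by rw [hSnellD, hSnellE]
    nlinarith [this]
  have hb : 0 < Dt * Et * ((inner ℝ dt n : ℝ) * (inner ℝ et n : ℝ)) := by nlinarith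
  have hprod : 0 < (inner ℝ dt n : ℝ) * (inner ℝ et n : ℝ) := by
    have := mul_pos hDt hEt
    nlinarith
  refine ⟨hprod, ?_, ?_⟩
  · constructor <;> intro h <;> nlinarith
  · rcases mul_pos_iff.mp hprod with ⟨h1, h2⟩ | ⟨h1, h2⟩
    · exact Or.inl ⟨h1.le, h2.le⟩
    · exact Or.inr ⟨not_le.mpr h1, not_le.mpr h2⟩
end
end

section
/- Let η̃, ξ̃, Ñ, Ẽ ∈ ℝ, and define D_t := sqrt( ( η̃² − ξ̃² + Ñ² + Ẽ² + sqrt( (η̃² − ξ̃² − Ñ² + Ẽ²)² + 4·(Ñ·Ẽ − η̃·ξ̃)² ) ) / 2 ) and E_t := sqrt(D_t² + ξ̃² − η̃²). Then: (i) D_t² ≥ Ñ²; (ii) D_t² ≥ η̃² − ξ̃² + Ẽ², so that D_t² + ξ̃² − η̃² ≥ Ẽ² ≥ 0 and E_t is a well-defined real number with E_t² ≥ Ẽ²; (iii) D_t² − E_t² = η̃² − ξ̃²; and (iv) (D_t² − Ñ²)·(E_t² − Ẽ²) = (Ñ·Ẽ − η̃·ξ̃)². -/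
noncomputable section

theorem transmitted_constants_properties (ηt ξt Nt Et' : ℝ)
    (Dt : ℝ)
    (hDt : Dt = Real.sqrt ((ηt ^ 2 - ξt ^ 2 + Nt ^ 2 + Et' ^ 2
      + Real.sqrt ((ηt ^ 2 - ξt ^ 2 - Nt ^ 2 + Et' ^ 2) ^ 2
        + 4 * (Nt * Et' - ηt * ξt) ^ 2)) / 2))
    (Et : ℝ) (hEt : Et = Real.sqrt (Dt ^ 2 + ξt ^ 2 - ηt ^ 2)) :
    Nt ^ 2 ≤ Dt ^ 2
      ∧ (ηt ^ 2 - ξt ^ 2 + Et' ^ 2 ≤ Dt ^ 2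
          ∧ Et' ^ 2 ≤ Dt ^ 2 + ξt ^ 2 - ηt ^ 2 ∧ (0 : ℝ) ≤ Et' ^ 2
          ∧ Et' ^ 2 ≤ Et ^ 2)
      ∧ Dt ^ 2 - Et ^ 2 = ηt ^ 2 - ξt ^ 2
      ∧ (Dt ^ 2 - Nt ^ 2) * (Et ^ 2 - Et' ^ 2) = (Nt * Et' - ηt * ξt) ^ 2 := by
  set B : ℝ := ηt ^ 2 - ξt ^ 2 - Nt ^ 2 + Et' ^ 2 with hB
  set S : ℝ := Real.sqrt (B ^ 2 + 4 * (Nt * Et' - ηt * ξt) ^ 2) with hS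
  have hSnn : 0 ≤ S := Real.sqrt_nonneg _
  have hS2 : S ^ 2 = B ^ 2 + 4 * (Nt * Et' - ηt * ξt) ^ 2 := by
    rw [hS, Real.sq_sqrt]; positivity
  have habsB : |B| ≤ S := by
    rw [hS, ← Real.sqrt_sq_eq_abs]
    exact Real.sqrt_le_sqrt (by nlinarith [sq_nonneg (Nt * Et' - ηt * ξt)])
  have hB1 : -S ≤ B := neg_le_of_abs_le habsB
  have hB2 : B ≤ S := le_of_abs_le habsB
  have harg : 0 ≤ (ηt ^ 2 - ξt ^ 2 + Nt ^ 2 + Et' ^ 2 + S) / 2 := by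
    nlinarith [sq_nonneg Nt]
  have hDt2 : Dt ^ 2 = (ηt ^ 2 - ξt ^ 2 + Nt ^ 2 + Et' ^ 2 + S) / 2 := by
    rw [hDt, Real.sq_sqrt harg]
  have h1 : Nt ^ 2 ≤ Dt ^ 2 := by rw [hDt2]; nlinarith
  have h2 : ηt ^ 2 - ξt ^ 2 + Et' ^ 2 ≤ Dt ^ 2 := by rw [hDt2]; nlinarith [sq_nonneg Nt]
  have h3 : Et' ^ 2 ≤ Dt ^ 2 + ξt ^ 2 - ηt ^ 2 := by linarith
  have hEt2 : Et ^ 2 = Dt ^ 2 + ξt ^ 2 - ηt ^ 2 := by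
    rw [hEt, Real.sq_sqrt (by nlinarith [sq_nonneg Et'])]
  refine ⟨h1, ⟨h2, h3, sq_nonneg _, by linarith⟩, by linarith, ?_⟩
  have : (Dt ^ 2 - Nt ^ 2) * (Et ^ 2 - Et' ^ 2)
      = (S ^ 2 - B ^ 2) / 4 := by
    rw [hEt2, hDt2, hB]; ring_nf
  rw [this, hS2]; ring
end
end

section
/- Let t, n ∈ ℝ² be orthonormal vectors. Let η̃ > 0, ξ̃ > 0 and Ñ, Ẽ ∈ ℝ, and define D_t := sqrt( ( η̃² − ξ̃² + Ñ² + Ẽ² + sqrt( (η̃² − ξ̃² − Ñ² + Ẽ²)² + 4·(Ñ·Ẽ − η̃·ξ̃)² ) ) / 2 ) and E_t := sqrt(D_t² + ξ̃² − η̃²). Then D_t > 0 and E_t > 0, and there exist unit vectors dᵗ, eᵗ ∈ ℝ² such that D_t·⟪dᵗ,t⟫ = Ñ, E_t·⟪eᵗ,t⟫ = Ẽ, D_t² − E_t² = η̃² − ξ̃², and D_t·E_t·⟪dᵗ,eᵗ⟫ = η̃·ξ̃. (Equivalently: there exists a transmitted plane wave in the second medium satisfying both Snell's law relative to incident tangential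 data Ñ, Ẽ and the Helmholtz constraints for the wavenumber k̃ = η̃ + iξ̃.) -/
noncomputable section

lemma inner_comb (t n : V) (ht : ‖t‖ = 1) (hn : ‖n‖ = 1) (htn : (inner ℝ t n : ℝ) = 0)
    (a b c d : ℝ) : (inner ℝ (a•t+b•n) (c•t+d•n) : ℝ) = a*c + b*d := by
  have h1 : (inner ℝ t t : ℝ) = 1 := by rw [real_inner_self_eq_norm_sq, ht]; norm_num
  have h2 : (inner ℝ n n : ℝ) = 1 := by rw [real_inner_self_eq_norm_sq, hn]; norm_num
  have h3 : (inner ℝ n t : ℝ) = 0 := by rw [real_inner_comm]; exact htn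
  simp only [inner_add_left, inner_add_right, real_inner_smul_left, real_inner_smul_right,
    h1, h2, h3, htn]
  ring

set_option maxHeartbeats 1000000 in
theorem exists_transmitted_directions
    (t n : V) (ht : ‖t‖ = 1) (hn : ‖n‖ = 1) (htn : (inner ℝ t n : ℝ) = 0)
    (ηt ξt : ℝ) (hηt : 0 < ηt) (hξt : 0 < ξt) (Nt Et' : ℝ)
    (Dt : ℝ)
    (hDt : Dt = Real.sqrt ((ηt ^ 2 - ξt ^ 2 + Nt ^ 2 + Et' ^ 2
      + Real.sqrt ((ηt ^ 2 - ξt ^ 2 - Nt ^ 2 + Et' ^ 2) ^ 2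
        + 4 * (Nt * Et' - ηt * ξt) ^ 2)) / 2))
    (Et : ℝ) (hEt : Et = Real.sqrt (Dt ^ 2 + ξt ^ 2 - ηt ^ 2)) :
    0 < Dt ∧ 0 < Et ∧
      ∃ dt et : V, ‖dt‖ = 1 ∧ ‖et‖ = 1
        ∧ Dt * (inner ℝ dt t : ℝ) = Nt
        ∧ Et * (inner ℝ et t : ℝ) = Et'
        ∧ Dt ^ 2 - Et ^ 2 = ηt ^ 2 - ξt ^ 2
        ∧ Dt * Et * (inner ℝ dt et : ℝ) = ηt * ξt := by
  set S := Real.sqrt ((ηt ^ 2 - ξt ^ 2 - Nt ^ 2 + Et' ^ 2) ^ 2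
        + 4 * (Nt * Et' - ηt * ξt) ^ 2) with hSdef
  have hS2 : S ^ 2 = (ηt ^ 2 - ξt ^ 2 - Nt ^ 2 + Et' ^ 2) ^ 2
      + 4 * (Nt * Et' - ηt * ξt) ^ 2 := by
    rw [hSdef, Real.sq_sqrt (by positivity)]
  have hSabs : |ηt ^ 2 - ξt ^ 2 - Nt ^ 2 + Et' ^ 2| ≤ S := by
    rw [hSdef, ← Real.sqrt_sq_eq_abs]
    exact Real.sqrt_le_sqrt (by nlinarith [sq_nonneg (Nt * Et' - ηt * ξt)])
  set P := (ηt ^ 2 - ξt ^ 2 - Nt ^ 2 + Et' ^ 2 + S) / 2 with hPdef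
  set Q := (-(ηt ^ 2) + ξt ^ 2 + Nt ^ 2 - Et' ^ 2 + S) / 2 with hQdef
  have hP : 0 ≤ P := by
    have := neg_abs_le (ηt ^ 2 - ξt ^ 2 - Nt ^ 2 + Et' ^ 2)
    rw [hPdef]; linarith
  have hQ : 0 ≤ Q := by
    have := le_abs_self (ηt ^ 2 - ξt ^ 2 - Nt ^ 2 + Et' ^ 2)
    rw [hQdef]; linarith
  have hPQ : P * Q = (Nt * Et' - ηt * ξt) ^ 2 := by
    have : P * Q = (S ^ 2 - (ηt ^ 2 - ξt ^ 2 - Nt ^ 2 + Et' ^ 2) ^ 2) / 4 := by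
      rw [hPdef, hQdef]; ring
    rw [this, hS2]; ring
  have hDt2 : Dt ^ 2 = Nt ^ 2 + P := by
    have harg : (ηt ^ 2 - ξt ^ 2 + Nt ^ 2 + Et' ^ 2 + S) / 2 = Nt ^ 2 + P := by
      rw [hPdef]; ring
    rw [hDt, harg, Real.sq_sqrt (by linarith [sq_nonneg Nt])]
  have hEt2 : Et ^ 2 = Et' ^ 2 + Q := by
    have harg : Dt ^ 2 + ξt ^ 2 - ηt ^ 2 = Et' ^ 2 + Q := by
      rw [hDt2, hPdef, hQdef]; ring
    rw [hEt, harg, Real.sq_sqrt (by linarith [sq_nonneg Et'])]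
  have hDnn : 0 ≤ Dt := by rw [hDt]; exact Real.sqrt_nonneg _
  have hEnn : 0 ≤ Et := by rw [hEt]; exact Real.sqrt_nonneg _
  have hDpos : 0 < Dt := by
    rcases hDnn.lt_or_eq with h | h
    · exact h
    · exfalso
      have h0 : Nt ^ 2 + P = 0 := by rw [← hDt2, ← h]; ring
      have hN2 : Nt ^ 2 = 0 := by nlinarith [sq_nonneg Nt]
      have hN : Nt = 0 := pow_eq_zero_iff two_ne_zero |>.mp hN2
      have hP0 : P = 0 := by linarith [sq_nonneg Nt]
      rw [hP0, hN] at hPQ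
      have hc : (ηt * ξt) ^ 2 = 0 := by linear_combination -hPQ
      exact (pow_ne_zero 2 (mul_pos hηt hξt).ne') hc
  have hEpos : 0 < Et := by
    rcases hEnn.lt_or_eq with h | h
    · exact h
    · exfalso
      have h0 : Et' ^ 2 + Q = 0 := by rw [← hEt2, ← h]; ring
      have hE2 : Et' ^ 2 = 0 := by nlinarith [sq_nonneg Et']
      have hE : Et' = 0 := pow_eq_zero_iff two_ne_zero |>.mp hE2
      have hQ0 : Q = 0 := by linarith [sq_nonneg Et']
      rw [hQ0, hE] at hPQ
      have hc : (ηt * ξt) ^ 2 = 0 := by linear_combination -hPQ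
      exact (pow_ne_zero 2 (mul_pos hηt hξt).ne') hc
  refine ⟨hDpos, hEpos, ?_⟩
  set ε : ℝ := if 0 ≤ ηt * ξt - Nt * Et' then (1:ℝ) else -1 with hεdef
  have hε2 : ε ^ 2 = 1 := by rw [hεdef]; split_ifs <;> norm_num
  have hsP : Real.sqrt P ^ 2 = P := Real.sq_sqrt hP
  have hsQ : Real.sqrt Q ^ 2 = Q := Real.sq_sqrt hQ
  have hsPQ : Real.sqrt P * Real.sqrt Q = |Nt * Et' - ηt * ξt| := by
    rw [← Real.sqrt_mul hP, hPQ, Real.sqrt_sq_eq_abs]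
  have hkey : ε * (Real.sqrt P * Real.sqrt Q) = ηt * ξt - Nt * Et' := by
    rw [hsPQ, hεdef]
    split_ifs with h
    · rw [abs_of_nonpos (by linarith)]; ring
    · rw [abs_of_nonneg (by linarith)]; ring
  refine ⟨(Nt/Dt) • t + (Real.sqrt P / Dt) • n,
          (Et'/Et) • t + (ε * Real.sqrt Q / Et) • n, ?_, ?_, ?_, ?_, ?_, ?_⟩
  · have h1 : (inner ℝ ((Nt/Dt) • t + (Real.sqrt P / Dt) • n)
        ((Nt/Dt) • t + (Real.sqrt P / Dt) • n) : ℝ) = 1 := by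
      rw [inner_comb t n ht hn htn]
      have e1 : Nt/Dt*(Nt/Dt) + Real.sqrt P/Dt*(Real.sqrt P/Dt)
          = (Nt ^ 2 + Real.sqrt P ^ 2)/Dt ^ 2 := by ring
      rw [e1, hsP, ← hDt2, div_self (by positivity)]
    have h2 := real_inner_self_eq_norm_sq ((Nt/Dt) • t + (Real.sqrt P / Dt) • n)
    rw [h1] at h2
    rw [← Real.sqrt_sq (norm_nonneg ((Nt/Dt) • t + (Real.sqrt P / Dt) • n)), ← h2,
      Real.sqrt_one]
  · have h1 : (inner ℝ ((Et'/Et) • t + (ε * Real.sqrt Q / Et) • n)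
        ((Et'/Et) • t + (ε * Real.sqrt Q / Et) • n) : ℝ) = 1 := by
      rw [inner_comb t n ht hn htn]
      have e1 : Et'/Et*(Et'/Et) + ε * Real.sqrt Q/Et*(ε * Real.sqrt Q/Et)
          = (Et' ^ 2 + ε ^ 2 * Real.sqrt Q ^ 2)/Et ^ 2 := by ring
      rw [e1, hsQ, hε2, one_mul, ← hEt2, div_self (by positivity)]
    have h2 := real_inner_self_eq_norm_sq ((Et'/Et) • t + (ε * Real.sqrt Q / Et) • n)
    rw [h1] at h2
    rw [← Real.sqrt_sq (norm_nonneg ((Et'/Et) • t + (ε * Real.sqrt Q / Et) • n)), ← h2,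
      Real.sqrt_one]
  · have h2 := inner_comb t n ht hn htn (Nt/Dt) (Real.sqrt P/Dt) 1 0
    rw [one_smul, zero_smul, add_zero] at h2
    rw [h2]
    field_simp
    ring
  · have h2 := inner_comb t n ht hn htn (Et'/Et) (ε * Real.sqrt Q/Et) 1 0
    rw [one_smul, zero_smul, add_zero] at h2
    rw [h2]
    field_simp
    ring
  · rw [hDt2, hEt2, hPdef, hQdef]; ring
  · rw [inner_comb t n ht hn htn]
    have e1 : Nt/Dt*(Et'/Et) + Real.sqrt P/Dt*(ε * Real.sqrt Q/Et)
        = (Nt * Et' + ε * (Real.sqrt P * Real.sqrt Q))/(Dt*Et) := by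
      field_simp
    rw [e1, hkey, mul_div_assoc']
    rw [show Dt * Et * (Nt * Et' + (ηt * ξt - Nt * Et')) = ηt * ξt * (Dt * Et) from by ring]
    exact mul_div_cancel_right₀ _ (by positivity)
end
end

section
/- Let t, n ∈ ℝ² be orthonormal vectors, let η̃ > 0 and Ñ ∈ ℝ with |Ñ| > η̃ (total internal reflection), and define D_t := max(η̃, |Ñ|) = |Ñ| and E_t := sqrt(Ñ² − η̃²). Set dᵗ := sign(Ñ)·t and eᵗ := n. Then E_t > 0; dᵗ and eᵗ are unit vectors; Snell's law holds with tangential data Ñ and Ẽ = 0, i.e., D_t·⟪dᵗ,t⟫ = Ñ and E_t·⟪eᵗ,t⟫ = 0; the transmitted Helmholtz constraints hold, i.e., D_t² − E_t² = η̃² and D_t·E_t·⟪dᵗ,eᵗ⟫ = 0; and both geometrical-optics sign conditions hold simultaneously: GO1 (⟪dᵗ,n⟫ ≥ 0) and GO2 (⟪eᵗ,n⟫ ≥ 0). -/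
noncomputable section

theorem total_internal_reflection_GO1_GO2_compatible
    (t n : V) (ht : ‖t‖ = 1) (hn : ‖n‖ = 1) (htn : (inner ℝ t n : ℝ) = 0)
    (ηt Nt : ℝ) (hηt : 0 < ηt) (hTIR : ηt < |Nt|)
    (Dt : ℝ) (hDt : Dt = max ηt |Nt|)
    (Et : ℝ) (hEt : Et = Real.sqrt (Nt ^ 2 - ηt ^ 2))
    (dt : V) (hdt : dt = Real.sign Nt • t)
    (et : V) (het : et = n) :
    Dt = |Nt|
      ∧ 0 < Et
      ∧ ‖dt‖ = 1 ∧ ‖et‖ = 1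
      ∧ Dt * (inner ℝ dt t : ℝ) = Nt
      ∧ Et * (inner ℝ et t : ℝ) = 0
      ∧ Dt ^ 2 - Et ^ 2 = ηt ^ 2
      ∧ Dt * Et * (inner ℝ dt et : ℝ) = 0
      ∧ (0 : ℝ) ≤ (inner ℝ dt n : ℝ) ∧ (0 : ℝ) ≤ (inner ℝ et n : ℝ) := by
  have hNt0 : Nt ≠ 0 := by
    intro h; rw [h, abs_zero] at hTIR; linarith
  have hsq : Nt ^ 2 - ηt ^ 2 > 0 := by
    have := sq_lt_sq' (by linarith [abs_nonneg Nt, neg_abs_le Nt]) hTIR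
    have h2 : ηt ^ 2 < |Nt| ^ 2 := by
      apply sq_lt_sq' <;> [linarith; exact hTIR]
    rw [sq_abs] at h2; linarith
  have hD : Dt = |Nt| := by rw [hDt, max_eq_right hTIR.le]
  have hEpos : 0 < Et := by rw [hEt]; exact Real.sqrt_pos.mpr hsq
  have hsign : Real.sign Nt * Real.sign Nt = 1 := by
    rcases lt_or_gt_of_ne hNt0 with h | h
    · rw [Real.sign_of_neg h]; ring
    · rw [Real.sign_of_pos h]; ring
  have habs : Real.sign Nt * |Nt| = Nt := by
    rcases lt_or_gt_of_ne hNt0 with h | h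
    · rw [Real.sign_of_neg h, abs_of_neg h]; ring
    · rw [Real.sign_of_pos h, abs_of_pos h]; ring
  have hsabs : |Real.sign Nt| = 1 := by
    rcases lt_or_gt_of_ne hNt0 with h | h
    · rw [Real.sign_of_neg h]; norm_num
    · rw [Real.sign_of_pos h]; norm_num
  have htt : (inner ℝ t t : ℝ) = 1 := by
    rw [real_inner_self_eq_norm_sq, ht]; norm_num
  have hnt : (inner ℝ n t : ℝ) = 0 := by rwa [real_inner_comm]
  refine ⟨hD, hEpos, ?_, ?_, ?_, ?_, ?_, ?_, ?_, ?_⟩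
  · rw [hdt, norm_smul, ht, Real.norm_eq_abs, hsabs, mul_one]
  · rw [het, hn]
  · rw [hdt, real_inner_smul_left, htt, hD, mul_one, mul_comm, habs]
  · rw [het, hnt, mul_zero]
  · rw [hD, hEt, Real.sq_sqrt hsq.le, sq_abs]; ring
  · rw [hdt, het, real_inner_smul_left, htn, mul_zero, mul_zero]
  · rw [hdt, real_inner_smul_left, htn, mul_zero]
  · rw [het, real_inner_self_eq_norm_sq, hn]; norm_num
end
end

section
/- Let t, n ∈ ℝ² be orthonormal vectors. Let dⁱ, eⁱ, dᵗ, eᵗ ∈ ℝ² be unit vectors and let D_i, E_i ∈ ℝ, D_t > 0, E_t > 0, η̃, ξ̃ ∈ ℝ with η̃·ξ̃ ≥ 0. Assume Snell's law: D_t·⟪dᵗ,t⟫ = D_i·⟪dⁱ,t⟫ and E_t·⟪eᵗ,t⟫ = E_i·⟪eⁱ,t⟫; assume the transmitted Helmholtz constraint D_t·E_t·⟪dᵗ,eᵗ⟫ = η̃·ξ̃; and assume the incident wave is homogeneous in the tangential direction, i.e., E_i·⟪eⁱ,t⟫ = 0. Then ⟪dᵗ,n⟫·⟪eᵗ,n⟫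 ≥ 0, so the conditions GO1 (⟪dᵗ,n⟫ ≥ 0) and GO2 (⟪eᵗ,n⟫ ≥ 0) are compatible: there is a consistent choice of signs of the normal components for which both hold. -/
noncomputable section

theorem GO1_GO2_compatible_of_tangentially_homogeneous
    (t n : V) (ht : ‖t‖ = 1) (hn : ‖n‖ = 1) (htn : (inner ℝ t n : ℝ) = 0)
    (di ei dt et : V)
    (hdi : ‖di‖ = 1) (hei : ‖ei‖ = 1) (hdt : ‖dt‖ = 1) (het : ‖et‖ = 1)
    (Di Ei : ℝ) (Dt Et ηt ξt : ℝ) (hDt : 0 < Dt) (hEt : 0 < Et)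
    (hηξ : 0 ≤ ηt * ξt)
    (hSnellD : Dt * (inner ℝ dt t : ℝ) = Di * (inner ℝ di t : ℝ))
    (hSnellE : Et * (inner ℝ et t : ℝ) = Ei * (inner ℝ ei t : ℝ))
    (hHelm : Dt * Et * (inner ℝ dt et : ℝ) = ηt * ξt)
    (hhom : Ei * (inner ℝ ei t : ℝ) = 0) :
    (0 : ℝ) ≤ (inner ℝ dt n : ℝ) * (inner ℝ et n : ℝ)
      ∧ (((0 : ℝ) ≤ (inner ℝ dt n : ℝ) ∧ (0 : ℝ) ≤ (inner ℝ et n : ℝ))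
          ∨ ((inner ℝ dt n : ℝ) ≤ 0 ∧ (inner ℝ et n : ℝ) ≤ 0)) := by
  have hett : (inner ℝ et t : ℝ) = 0 := by
    have : Et * (inner ℝ et t : ℝ) = 0 := by rw [hSnellE, hhom]
    exact (mul_eq_zero.1 this).resolve_left hEt.ne' 
  have hdec := inner_decomp t n ht hn htn dt et
  rw [hett, mul_zero, zero_add] at hdec
  have hprod : 0 ≤ (inner ℝ dt n : ℝ) * (inner ℝ et n : ℝ) := by
    rw [← hdec]
    nlinarith [hHelm ▸ hηξ, mul_pos hDt hEt]
  exact ⟨hprod, mul_nonneg_iff.1 hprod⟩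
end
end
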